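/- Let R be a commutative ring with total ring of fractions F(R). Let P ∈ F(R)^{n×m} and C ∈ F(R)^{m×n} be matrices such that det(E_n + PC) is a unit of F(R). Define H(P,C) = [[(E_n+PC)⁻¹, −P(E_m+CP)⁻¹], [C(E_n+PC)⁻¹, (E_m+CP)⁻¹]] ∈ F(R)^{(m+n)×(m+n)}. Then the R-modules T_{P,R} ⊕ T_{C,R} and T_{H(P,C),R} are isomorphic. -/

import Mathlib

open Matrix

/-- The feedback matrix `H(P,C)`. -/
noncomputable def Hmat {F : Type*} [CommRing F] {n m : ℕ}
    (P : Matrix (Fin n) (Fin m) F) (C : Matrix (Fin m) (Fin n) F) :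
    Matrix (Fin n ⊕ Fin m) (Fin n ⊕ Fin m) F :=
  Matrix.fromBlocks (1 + P * C)⁻¹ (-(P * (1 + C * P)⁻¹))
    (C * (1 + P * C)⁻¹) (1 + C * P)⁻¹

/-- The product of two submodules is linearly equivalent to the product of the modules. -/
def prodSubEquiv {R M M' : Type*} [CommRing R] [AddCommGroup M] [AddCommGroup M']
    [Module R M] [Module R M'] (p : Submodule R M) (q : Submodule R M') :
    (p.prod q) ≃ₗ[R] p × q where
  toFun x := (⟨x.1.1, x.2.1⟩, ⟨x.1.2, x.2.2⟩)
  map_add' _ _ := rfl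
  map_smul' _ _ := rfl
  invFun x := ⟨(x.1.1, x.2.1), ⟨x.1.2, x.2.2⟩⟩
  left_inv _ := rfl
  right_inv _ := rfl

/-- Well-definedness core: multiplying a family of row vectors over `R` by an invertible
matrix over the fraction field, staying inside `R`, induces an isomorphism of spans. -/
theorem span_iso_of_vecMul {R : Type*} [CommRing R] {κ α : Type*} [Fintype κ] [DecidableEq κ]
    (v w : α → κ → R) (M : Matrix κ κ (FractionRing R)) (hM : IsUnit M.det)
    (h : ∀ i, (fun j => algebraMap R (FractionRing R) (v i j)) ᵥ* M
        = fun j => algebraMap R (FractionRing R) (w i j)) :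
    Nonempty ((Submodule.span R (Set.range v)) ≃ₗ[R] (Submodule.span R (Set.range w))) := by
  let F := FractionRing R
  let ℓ : (κ → R) →ₗ[R] (κ → F) :=
    LinearMap.pi fun j => (Algebra.linearMap R F).comp (LinearMap.proj j)
  have hℓapp : ∀ (x : κ → R) (j : κ), ℓ x j = algebraMap R F (x j) := fun x j => rfl
  have hℓ : Function.Injective ℓ := by
    intro a b hab
    funext j
    exact IsFractionRing.injective R F (congrFun hab j)
  let e : (κ → F) ≃ₗ[F] (κ → F) :=
    LinearEquiv.ofLinear M.vecMulLinear M⁻¹.vecMulLinear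
      (LinearMap.ext fun x => by
        simp [Matrix.vecMul_vecMul, Matrix.nonsing_inv_mul M hM])
      (LinearMap.ext fun x => by
        simp [Matrix.vecMul_vecMul, Matrix.mul_nonsing_inv M hM])
  let eR : (κ → F) ≃ₗ[R] (κ → F) := e.restrictScalars R
  have heR : ∀ i, eR (ℓ (v i)) = ℓ (w i) := by
    intro i
    have h0 : eR (ℓ (v i)) = (fun j => algebraMap R F (v i j)) ᵥ* M := rfl
    rw [h0, h i]
    rfl
  have E1 := Submodule.equivMapOfInjective ℓ hℓ (Submodule.span R (Set.range v))
  have h1 : (Submodule.span R (Set.range v)).map ℓ = Submodule.span R (Set.range (fun i => ℓ (v i))) := by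
    rw [Submodule.map_span, ← Set.range_comp]; rfl
  have E2 := eR.submoduleMap (Submodule.span R (Set.range (fun i => ℓ (v i))))
  have h2 : (Submodule.span R (Set.range (fun i => ℓ (v i)))).map (eR : (κ → F) →ₗ[R] (κ → F))
      = Submodule.span R (Set.range (fun i => ℓ (w i))) := by
    rw [Submodule.map_span, ← Set.range_comp]
    have hfun : ((eR : (κ → F) →ₗ[R] (κ → F)) : (κ → F) → (κ → F)) ∘ (fun i => ℓ (v i))
        = fun i => ℓ (w i) := funext fun i => heR i
    rw [hfun]
  have E3 := Submodule.equivMapOfInjective ℓ hℓ (Submodule.span R (Set.range w))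
  have h3 : (Submodule.span R (Set.range w)).map ℓ = Submodule.span R (Set.range (fun i => ℓ (w i))) := by
    rw [Submodule.map_span, ← Set.range_comp]; rfl
  exact ⟨E1 ≪≫ₗ LinearEquiv.ofEq _ _ h1 ≪≫ₗ E2 ≪≫ₗ LinearEquiv.ofEq _ _ h2
    ≪≫ₗ (E3 ≪≫ₗ LinearEquiv.ofEq _ _ h3).symm⟩


/-- `H(P,C) * [[1,P],[-C,1]] = 1`. -/
theorem Hmat_mul_eq_one {F : Type*} [CommRing F] {n m : ℕ}
    (P : Matrix (Fin n) (Fin m) F) (C : Matrix (Fin m) (Fin n) F)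
    (hu : IsUnit (1 + P * C).det) :
    Hmat P C * fromBlocks 1 P (-C) 1 = 1 := by
  have hu' : IsUnit (1 + C * P).det := by rwa [← Matrix.det_one_add_mul_comm]
  have hPcomm : P * (1 + C * P)⁻¹ = (1 + P * C)⁻¹ * P := by
    have h1 : (1 + P * C) * P = P * (1 + C * P) := by
      rw [Matrix.add_mul, Matrix.one_mul, Matrix.mul_add, Matrix.mul_one, Matrix.mul_assoc]
    calc P * (1 + C * P)⁻¹
        = ((1 + P * C)⁻¹ * (1 + P * C)) * (P * (1 + C * P)⁻¹) := by
          rw [Matrix.nonsing_inv_mul _ hu, Matrix.one_mul]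
      _ = (1 + P * C)⁻¹ * (((1 + P * C) * P) * (1 + C * P)⁻¹) := by
          simp only [Matrix.mul_assoc]
      _ = (1 + P * C)⁻¹ * (P * ((1 + C * P) * (1 + C * P)⁻¹)) := by
          rw [h1, Matrix.mul_assoc]
      _ = (1 + P * C)⁻¹ * P := by rw [Matrix.mul_nonsing_inv _ hu', Matrix.mul_one]
  have hCcomm : C * (1 + P * C)⁻¹ = (1 + C * P)⁻¹ * C := by
    have h1 : (1 + C * P) * C = C * (1 + P * C) := by
      rw [Matrix.add_mul, Matrix.one_mul, Matrix.mul_add, Matrix.mul_one, Matrix.mul_assoc]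
    calc C * (1 + P * C)⁻¹
        = ((1 + C * P)⁻¹ * (1 + C * P)) * (C * (1 + P * C)⁻¹) := by
          rw [Matrix.nonsing_inv_mul _ hu', Matrix.one_mul]
      _ = (1 + C * P)⁻¹ * (((1 + C * P) * C) * (1 + P * C)⁻¹) := by
          simp only [Matrix.mul_assoc]
      _ = (1 + C * P)⁻¹ * (C * ((1 + P * C) * (1 + P * C)⁻¹)) := by
          rw [h1, Matrix.mul_assoc]
      _ = (1 + C * P)⁻¹ * C := by rw [Matrix.mul_nonsing_inv _ hu, Matrix.mul_one]
  have TL : (1 + P * C)⁻¹ * 1 + -(P * (1 + C * P)⁻¹) * -C = 1 := by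
    calc (1 + P * C)⁻¹ * 1 + -(P * (1 + C * P)⁻¹) * -C
        = (1 + P * C)⁻¹ * 1 + (1 + P * C)⁻¹ * (P * C) := by
          rw [Matrix.neg_mul, Matrix.mul_neg, neg_neg, hPcomm, Matrix.mul_assoc]
      _ = (1 + P * C)⁻¹ * (1 + P * C) := by rw [Matrix.mul_add]
      _ = 1 := Matrix.nonsing_inv_mul _ hu
  have TR : (1 + P * C)⁻¹ * P + -(P * (1 + C * P)⁻¹) * (1 : Matrix (Fin m) (Fin m) F) = 0 := by
    rw [Matrix.mul_one, hPcomm, add_neg_cancel]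
  have BL : C * (1 + P * C)⁻¹ * (1 : Matrix (Fin n) (Fin n) F) + (1 + C * P)⁻¹ * -C = 0 := by
    rw [Matrix.mul_one, hCcomm, Matrix.mul_neg, add_neg_cancel]
  have BR : C * (1 + P * C)⁻¹ * P + (1 + C * P)⁻¹ * (1 : Matrix (Fin m) (Fin m) F) = 1 := by
    calc C * (1 + P * C)⁻¹ * P + (1 + C * P)⁻¹ * (1 : Matrix (Fin m) (Fin m) F)
        = (1 + C * P)⁻¹ * (C * P) + (1 + C * P)⁻¹ * 1 := by
          rw [hCcomm, Matrix.mul_assoc]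
      _ = (1 + C * P)⁻¹ * (C * P + 1) := (Matrix.mul_add _ _ _).symm
      _ = 1 := by rw [add_comm (C * P) 1]; exact Matrix.nonsing_inv_mul _ hu'
  rw [Hmat, Matrix.fromBlocks_multiply, TL, TR, BL, BR, Matrix.fromBlocks_one]

theorem prod_span_equiv {R : Type*} [CommRing R] {n m : ℕ}
    (NP : Matrix (Fin n) (Fin m) R) (DP : Matrix (Fin m) (Fin m) R)
    (NC : Matrix (Fin m) (Fin n) R) (DC : Matrix (Fin n) (Fin n) R) :
    Nonempty (
      ((Submodule.span R (Set.range fun i => fromRows NP DP i)) ×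
       (Submodule.span R (Set.range fun i => fromRows NC DC i))) ≃ₗ[R]
      Submodule.span R (Set.range fun i =>
        fromRows (fromBlocks DC 0 0 DP) (fromBlocks DC NP (-NC) DP) i)) := by
  classical
  let v : ((Fin n ⊕ Fin m) ⊕ (Fin n ⊕ Fin m)) → (Fin n ⊕ Fin m) → R :=
    fun i => fromRows (fromBlocks DC 0 0 DP) (fromBlocks DC NP (-NC) DP) i
  let gP : (Fin n ⊕ Fin m) → (Fin m → R) := fun i => fromRows NP DP i
  let gC : (Fin m ⊕ Fin n) → (Fin n → R) := fun i => fromRows NC DC i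
  let Tp : Submodule R (Fin m → R) := Submodule.span R (Set.range gP)
  let Tc : Submodule R (Fin n → R) := Submodule.span R (Set.range gC)
  let ee : ((Fin n → R) × (Fin m → R)) ≃ₗ[R] ((Fin n ⊕ Fin m) → R) :=
    (LinearEquiv.sumArrowLequivProdArrow (Fin n) (Fin m) R R).symm
  have hee : ∀ (a : Fin n → R) (b : Fin m → R), ee (a, b) = Sum.elim a b := by
    intro a b; funext k
    cases k with
    | inl j => simp [ee]
    | inr j => simp [ee]
  have hvll : ∀ j, v (Sum.inl (Sum.inl j)) = Sum.elim (DC j) (0 : Fin m → R) := by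
    intro j; funext k
    cases k with
    | inl k => simp [v]
    | inr k => simp [v]
  have hvlr : ∀ j, v (Sum.inl (Sum.inr j)) = Sum.elim (0 : Fin n → R) (DP j) := by
    intro j; funext k
    cases k with
    | inl k => simp [v]
    | inr k => simp [v]
  have hvrl : ∀ j, v (Sum.inr (Sum.inl j)) = Sum.elim (DC j) (NP j) := by
    intro j; funext k
    cases k with
    | inl k => simp [v]
    | inr k => simp [v]
  have hvrr : ∀ j, v (Sum.inr (Sum.inr j)) = Sum.elim (-(NC j)) (DP j) := by
    intro j; funext k
    cases k with
    | inl k => simp [v]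
    | inr k => simp [v]
  -- elementary additivity of Sum.elim
  have helim_add : ∀ (a c : Fin n → R) (b d : Fin m → R),
      (Sum.elim a b + Sum.elim c d : (Fin n ⊕ Fin m) → R) = Sum.elim (a + c) (b + d) := by
    intro a c b d; funext k; cases k <;> simp
  have helim_sub : ∀ (a c : Fin n → R) (b d : Fin m → R),
      (Sum.elim a b - Sum.elim c d : (Fin n ⊕ Fin m) → R) = Sum.elim (a - c) (b - d) := by
    intro a c b d; funext k; cases k <;> simp
  -- the key submodule equality
  have hmap : (Tc.prod Tp).map (ee : ((Fin n → R) × (Fin m → R)) →ₗ[R] ((Fin n ⊕ Fin m) → R))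
      = Submodule.span R (Set.range v) := by
    have hTc : Tc = Submodule.span R (Set.range gC) := rfl
    have hTp : Tp = Submodule.span R (Set.range gP) := rfl
    rw [LinearMap.prod_eq_sup_map, Submodule.map_sup, ← Submodule.map_comp, ← Submodule.map_comp,
      hTc, hTp, Submodule.map_span, Submodule.map_span, ← Submodule.span_union]
    apply le_antisymm
    · rw [Submodule.span_le]
      rintro x (⟨y, ⟨i, rfl⟩, rfl⟩ | ⟨y, ⟨i, rfl⟩, rfl⟩)
      · -- image of gC i under ee ∘ inl
        have hx : ((ee : _ →ₗ[R] _).comp (LinearMap.inl R (Fin n → R) (Fin m → R))) (gC i)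
            = Sum.elim (gC i) (0 : Fin m → R) := by
          simp only [LinearMap.comp_apply, LinearMap.coe_inl]
          exact hee _ _
        rw [hx]
        cases i with
        | inl j =>
          -- gC (inl j) = NC j :  Sum.elim (NC j) 0 = v (inl (inr j)) - v (inr (inr j))
          have : (Sum.elim (gC (Sum.inl j)) (0 : Fin m → R) : (Fin n ⊕ Fin m) → R)
              = v (Sum.inl (Sum.inr j)) - v (Sum.inr (Sum.inr j)) := by
            rw [hvlr, hvrr, helim_sub]
            funext k; cases k <;> simp [gC, Matrix.fromRows] <;> rfl
          rw [this]
          exact sub_mem (Submodule.subset_span ⟨_, rfl⟩) (Submodule.subset_span ⟨_, rfl⟩)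
        | inr j =>
          have : (Sum.elim (gC (Sum.inr j)) (0 : Fin m → R) : (Fin n ⊕ Fin m) → R)
              = v (Sum.inl (Sum.inl j)) := by
            rw [hvll]; rfl
          rw [this]
          exact Submodule.subset_span ⟨_, rfl⟩
      · have hx : ((ee : _ →ₗ[R] _).comp (LinearMap.inr R (Fin n → R) (Fin m → R))) (gP i)
            = Sum.elim (0 : Fin n → R) (gP i) := by
          simp only [LinearMap.comp_apply, LinearMap.coe_inr]
          exact hee _ _
        rw [hx]
        cases i with
        | inl j =>
          have : (Sum.elim (0 : Fin n → R) (gP (Sum.inl j)) : (Fin n ⊕ Fin m) → R)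
              = v (Sum.inr (Sum.inl j)) - v (Sum.inl (Sum.inl j)) := by
            rw [hvrl, hvll, helim_sub]
            funext k; cases k <;> simp [gP, Matrix.fromRows] <;> rfl
          rw [this]
          exact sub_mem (Submodule.subset_span ⟨_, rfl⟩) (Submodule.subset_span ⟨_, rfl⟩)
        | inr j =>
          have : (Sum.elim (0 : Fin n → R) (gP (Sum.inr j)) : (Fin n ⊕ Fin m) → R)
              = v (Sum.inl (Sum.inr j)) := by
            rw [hvlr]; rfl
          rw [this]
          exact Submodule.subset_span ⟨_, rfl⟩
    · rw [Submodule.span_le]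
      rintro x ⟨i, rfl⟩
      have memC : ∀ (a : Fin n → R), a ∈ Set.range gC →
          (Sum.elim a (0 : Fin m → R) : (Fin n ⊕ Fin m) → R) ∈
            Submodule.span R ((((ee : _ →ₗ[R] _).comp (LinearMap.inl R (Fin n → R) (Fin m → R)))
              '' Set.range gC) ∪ (((ee : _ →ₗ[R] _).comp (LinearMap.inr R (Fin n → R) (Fin m → R)))
              '' Set.range gP)) := by
        intro a ha
        apply Submodule.subset_span
        apply Set.mem_union_left
        refine ⟨a, ha, ?_⟩
        simp only [LinearMap.comp_apply, LinearMap.coe_inl]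
        exact hee _ _
      have memP : ∀ (b : Fin m → R), b ∈ Set.range gP →
          (Sum.elim (0 : Fin n → R) b : (Fin n ⊕ Fin m) → R) ∈
            Submodule.span R ((((ee : _ →ₗ[R] _).comp (LinearMap.inl R (Fin n → R) (Fin m → R)))
              '' Set.range gC) ∪ (((ee : _ →ₗ[R] _).comp (LinearMap.inr R (Fin n → R) (Fin m → R)))
              '' Set.range gP)) := by
        intro b hb
        apply Submodule.subset_span
        apply Set.mem_union_right
        refine ⟨b, hb, ?_⟩
        simp only [LinearMap.comp_apply, LinearMap.coe_inr]
        exact hee _ _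
      cases i with
      | inl i =>
        cases i with
        | inl j =>
          rw [hvll]
          exact memC _ ⟨Sum.inr j, rfl⟩
        | inr j =>
          rw [hvlr]
          exact memP _ ⟨Sum.inr j, rfl⟩
      | inr i =>
        cases i with
        | inl j =>
          rw [hvrl]
          have : (Sum.elim (DC j) (NP j) : (Fin n ⊕ Fin m) → R)
              = Sum.elim (DC j) (0 : Fin m → R) + Sum.elim (0 : Fin n → R) (NP j) := by
            rw [helim_add]; simp
          rw [this]
          exact add_mem (memC _ ⟨Sum.inr j, rfl⟩) (memP _ ⟨Sum.inl j, rfl⟩)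
        | inr j =>
          rw [hvrr]
          have : (Sum.elim (-(NC j)) (DP j) : (Fin n ⊕ Fin m) → R)
              = Sum.elim (0 : Fin n → R) (DP j) - Sum.elim (NC j) (0 : Fin m → R) := by
            rw [helim_sub]; simp
          rw [this]
          exact sub_mem (memP _ ⟨Sum.inr j, rfl⟩) (memC _ ⟨Sum.inl j, rfl⟩)
  exact ⟨(LinearEquiv.prodComm R Tp Tc) ≪≫ₗ (prodSubEquiv Tc Tp).symm
    ≪≫ₗ ee.submoduleMap (Tc.prod Tp) ≪≫ₗ LinearEquiv.ofEq _ _ hmap⟩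

/-- `T_{P,R} ⊕ T_{C,R} ≅ T_{H(P,C),R}`. -/
theorem stmt_4 {R : Type*} [CommRing R] {n m : ℕ}
    (P : Matrix (Fin n) (Fin m) (FractionRing R))
    (C : Matrix (Fin m) (Fin n) (FractionRing R))
    (hu : IsUnit (1 + P * C).det)
    -- a right fraction P = N_P D_P⁻¹ over R
    (NP : Matrix (Fin n) (Fin m) R) (DP : Matrix (Fin m) (Fin m) R)
    (hDP : DP.det ∈ nonZeroDivisors R)
    (hP : P * DP.map (algebraMap R (FractionRing R)) = NP.map (algebraMap R (FractionRing R)))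
    -- a right fraction C = N_C D_C⁻¹ over R
    (NC : Matrix (Fin m) (Fin n) R) (DC : Matrix (Fin n) (Fin n) R)
    (hDC : DC.det ∈ nonZeroDivisors R)
    (hC : C * DC.map (algebraMap R (FractionRing R)) = NC.map (algebraMap R (FractionRing R)))
    -- a right fraction H(P,C) = N_H D_H⁻¹ over R
    (NH DH : Matrix (Fin n ⊕ Fin m) (Fin n ⊕ Fin m) R)
    (hDH : DH.det ∈ nonZeroDivisors R)
    (hH : Hmat P C * DH.map (algebraMap R (FractionRing R))
      = NH.map (algebraMap R (FractionRing R))) :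
    Nonempty
      (((Submodule.span R (Set.range fun i => Matrix.fromRows NP DP i)) ×
        (Submodule.span R (Set.range fun i => Matrix.fromRows NC DC i))) ≃ₗ[R]
       (Submodule.span R (Set.range fun i => Matrix.fromRows NH DH i))) := by

  classical
  have unit_of_nzd : ∀ {κ : Type} [Fintype κ] [DecidableEq κ] (X : Matrix κ κ R),
      X.det ∈ nonZeroDivisors R → IsUnit ((X.map (algebraMap R (FractionRing R))).det) := by
    intro κ _ _ X hX
    have h1 : (X.map (algebraMap R (FractionRing R))).det
        = algebraMap R (FractionRing R) X.det := ((algebraMap R (FractionRing R)).map_det X).symm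
    rw [h1]
    exact IsLocalization.map_units (M := nonZeroDivisors R) (FractionRing R) ⟨X.det, hX⟩
  have uDC := unit_of_nzd DC hDC
  have uDP := unit_of_nzd DP hDP
  have uDH := unit_of_nzd DH hDH
  have hu' : IsUnit (1 + C * P).det := by rwa [← Matrix.det_one_add_mul_comm]
  -- notation
  set ι : R →+* FractionRing R := algebraMap R (FractionRing R) with hιdef
  set A0 : Matrix (Fin n ⊕ Fin m) (Fin n ⊕ Fin m) R := fromBlocks DC 0 0 DP with hA0def
  set B0 : Matrix (Fin n ⊕ Fin m) (Fin n ⊕ Fin m) R := fromBlocks DC NP (-NC) DP with hB0def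
  -- B0 over F factors through M0
  have hmapA0 : A0.map ι = fromBlocks (DC.map ι) 0 0 (DP.map ι) := by
    ext i j
    cases i <;> cases j <;> simp [hA0def, Matrix.map_apply]
  have hmapB0 : B0.map ι = fromBlocks (DC.map ι) (NP.map ι) (-(NC.map ι)) (DP.map ι) := by
    ext i j
    cases i <;> cases j <;> simp [hB0def, Matrix.map_apply]
  have hB0 : B0.map ι = fromBlocks 1 P (-C) 1 * A0.map ι := by
    rw [hmapA0, hmapB0]
    simp only [Matrix.fromBlocks_multiply, Matrix.one_mul, Matrix.mul_zero, Matrix.zero_mul,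
      Matrix.neg_mul, add_zero, zero_add, neg_zero, hP, hC]
  have huB0 : IsUnit ((B0.map ι).det) := by
    rw [hB0, Matrix.det_mul, Matrix.det_fromBlocks_one₁₁, hmapA0, Matrix.det_fromBlocks_zero₂₁]
    have h2 : ((1 : Matrix (Fin m) (Fin m) (FractionRing R)) - -C * P).det
        = (1 + C * P).det := by rw [Matrix.neg_mul, sub_neg_eq_add]
    rw [h2]
    exact (hu'.mul (uDC.mul uDP))
  have hA0H : A0.map ι = Hmat P C * B0.map ι := by
    rw [hB0, ← Matrix.mul_assoc, Hmat_mul_eq_one P C hu, Matrix.one_mul]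
  -- the transition matrix
  set MM : Matrix (Fin n ⊕ Fin m) (Fin n ⊕ Fin m) (FractionRing R) :=
    (B0.map ι)⁻¹ * DH.map ι with hMMdef
  have hMM : IsUnit MM.det := by
    rw [hMMdef, Matrix.det_mul]
    exact (Matrix.isUnit_nonsing_inv_det _ huB0).mul uDH
  have htop : (A0.map ι) * MM = NH.map ι := by
    rw [hMMdef, hA0H, Matrix.mul_assoc, ← Matrix.mul_assoc (B0.map ι),
      Matrix.mul_nonsing_inv _ huB0, Matrix.one_mul, hH]
  have hbot : (B0.map ι) * MM = DH.map ι := by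
    rw [hMMdef, ← Matrix.mul_assoc, Matrix.mul_nonsing_inv _ huB0, Matrix.one_mul]
  have hcond : ∀ i, (fun j => ι (fromRows A0 B0 i j)) ᵥ* MM
      = fun j => ι (fromRows NH DH i j) := by
    intro i
    funext j
    cases i with
    | inl i =>
      have := congrFun (congrFun htop i) j
      simpa [Matrix.mul_apply, Matrix.vecMul, dotProduct, Matrix.map_apply,
        Matrix.fromRows_apply_inl] using this
    | inr i =>
      have := congrFun (congrFun hbot i) j
      simpa [Matrix.mul_apply, Matrix.vecMul, dotProduct, Matrix.map_apply,
        Matrix.fromRows_apply_inr] using this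
  obtain ⟨E1⟩ := prod_span_equiv NP DP NC DC
  obtain ⟨E2⟩ := span_iso_of_vecMul (fun i => fromRows A0 B0 i) (fun i => fromRows NH DH i)
    MM hMM hcond
  exact ⟨E1 ≪≫ₗ E2⟩
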